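/- Let D = (V,A) be a DAG, let A' ⊆ A be a minimum-cardinality arc set such that D − A' is a funnel, and let L* be a funnel labeling of D − A'. Then every arc set B obtained from D and L* by the satisfaction rule has |B| = |A'|. -/

import Mathlib

variable {V : Type*} [Fintype V] [DecidableEq V]

/-- Arc adjacency of a digraph given by its finite arc set. -/
def ArcAdj (A : Finset (V × V)) : V → V → Prop := fun u v => (u, v) ∈ A

/-- A digraph is a DAG if it contains no directed cycle. -/
def IsDAG (A : Finset (V × V)) : Prop := ∀ v : V, ¬ Relation.TransGen (ArcAdj A) v v

/-- Indegree of a vertex. -/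
def inDeg (A : Finset (V × V)) (v : V) : ℕ := (A.filter fun e => e.2 = v).card

/-- Outdegree of a vertex. -/
def outDeg (A : Finset (V × V)) (v : V) : ℕ := (A.filter fun e => e.1 = v).card

/-- A source is a vertex of indegree 0. -/
def IsSource (A : Finset (V × V)) (v : V) : Prop := inDeg A v = 0

/-- A sink is a vertex of outdegree 0. -/
def IsSink (A : Finset (V × V)) (v : V) : Prop := outDeg A v = 0

/-- The arcs (consecutive pairs of vertices) of a path given as a list of vertices. -/
def arcsOf (p : List V) : List (V × V) := p.zip p.tail

/-- A source-sink path: a directed path (with at least one arc) starting at a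
source and ending at a sink. -/
def IsSourceSinkPath (A : Finset (V × V)) (p : List V) : Prop :=
  2 ≤ p.length ∧ List.Chain' (ArcAdj A) p ∧ p.Nodup ∧
  (∃ s, p.head? = some s ∧ IsSource A s) ∧
  (∃ t, p.getLast? = some t ∧ IsSink A t)

/-- An arc is private if exactly one source-sink path contains it. -/
def IsPrivate (A : Finset (V × V)) (e : V × V) : Prop :=
  ∃! p : List V, IsSourceSinkPath A p ∧ e ∈ arcsOf p

/-- A funnel: every source-sink path contains at least one private arc. -/
def IsFunnel (A : Finset (V × V)) : Prop :=
  ∀ p : List V, IsSourceSinkPath A p → ∃ e ∈ arcsOf p, IsPrivate A e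

/-- The arc-deletion distance to a funnel: the minimum number of arcs whose
deletion turns the digraph into a funnel. -/
noncomputable def funnelDist (A : Finset (V × V)) : ℕ :=
  sInf {k | ∃ B ⊆ A, B.card = k ∧ IsFunnel (A \ B)}

/-- Vertex labels for funnel labelings. -/
inductive Label : Type where
  | fork
  | merge
deriving DecidableEq

/-- A funnel labeling: Fork vertices have indegree at most 1, Merge vertices have
outdegree at most 1, and no arc goes from a Merge vertex to a Fork vertex. -/
def FunnelLabeling (A : Finset (V × V)) (L : V → Label) : Prop :=
  (∀ v, L v = Label.fork → inDeg A v ≤ 1) ∧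
  (∀ v, L v = Label.merge → outDeg A v ≤ 1) ∧
  ∀ v u, (v, u) ∈ A → ¬(L v = Label.merge ∧ L u = Label.fork)

/-- The out-arcs of a vertex. -/
def outArcs (A : Finset (V × V)) (v : V) : Finset (V × V) := A.filter fun e => e.1 = v

/-- The in-arcs of a vertex. -/
def inArcs (A : Finset (V × V)) (v : V) : Finset (V × V) := A.filter fun e => e.2 = v

/-- The set `S` is a valid contribution of vertex `v` to the satisfaction rule:
if `L v = Merge`, all out-arcs of `v` except one chosen arc to a Merge
out-neighbor if one exists, and all out-arcs otherwise; symmetrically for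
`L v = Fork` with in-arcs. -/
def SatRuleAt (A : Finset (V × V)) (L : V → Label) (v : V) (S : Finset (V × V)) : Prop :=
  (L v = Label.merge ∧
    ((∃ u, (v, u) ∈ A ∧ L u = Label.merge ∧ S = (outArcs A v).erase (v, u)) ∨
     ((∀ u, (v, u) ∈ A → L u ≠ Label.merge) ∧ S = outArcs A v))) ∨
  (L v = Label.fork ∧
    ((∃ u, (u, v) ∈ A ∧ L u = Label.fork ∧ S = (inArcs A v).erase (u, v)) ∨
     ((∀ u, (u, v) ∈ A → L u ≠ Label.fork) ∧ S = inArcs A v)))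

/-- `B` is an arc set obtained from `D` and `L` by the satisfaction rule:
the union over all vertices of their contributions. -/
def SatRule (A : Finset (V × V)) (L : V → Label) (B : Finset (V × V)) : Prop :=
  ∃ f : V → Finset (V × V), (∀ v, SatRuleAt A L v (f v)) ∧ B = Finset.univ.biUnion f


set_option linter.unusedSectionVars false
set_option maxHeartbeats 1000000

lemma arcsOf_cons (c d : V) (r : List V) : arcsOf (c :: d :: r) = (c, d) :: arcsOf (d :: r) := rfl

lemma mem_arcsOf : ∀ (p : List V) (x y : V), (x, y) ∈ arcsOf p → ∃ a b, p = a ++ x :: y :: b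
  | [], x, y, h => by simp [arcsOf] at h
  | [x0], x, y, h => by simp [arcsOf] at h
  | x0 :: y0 :: t, x, y, h => by
    rw [arcsOf_cons, List.mem_cons] at h
    rcases h with h | h
    · injection h with h1 h2
      exact ⟨[], t, by rw [List.nil_append, h1, h2]⟩
    · obtain ⟨a, b, hab⟩ := mem_arcsOf (y0 :: t) x y h
      exact ⟨x0 :: a, b, by simp [hab]⟩

lemma arc_mem_arcsOf : ∀ (a : List V) (x y : V) (b : List V), (x, y) ∈ arcsOf (a ++ x :: y :: b)
  | [], x, y, b => by rw [List.nil_append, arcsOf_cons]; exact List.mem_cons_self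
  | c :: a', x, y, b => by
    have h := arc_mem_arcsOf a' x y b
    cases h' : a' ++ x :: y :: b with
    | nil => simp at h'
    | cons d r =>
      show (x, y) ∈ arcsOf (c :: (a' ++ x :: y :: b))
      rw [h', arcsOf_cons]
      exact List.mem_cons_of_mem _ (h' ▸ h)

lemma uniq_chain {R : V → V → Prop} (P : V → Prop)
    (hP : ∀ x z z', P x → R x z → R x z' → z = z')
    (hPs : ∀ x z, P x → R x z → P z) :
    ∀ (q1 : List V) (x : V) (q2 : List V), P x →
      List.Chain' R (x :: q1) → List.Chain' R (x :: q2) →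
      (∀ t z, (x :: q1).getLast? = some t → ¬ R t z) →
      (∀ t z, (x :: q2).getLast? = some t → ¬ R t z) →
      q1 = q2 := by
  intro q1
  induction q1 with
  | nil =>
    intro x q2 hx h1 h2 hl1 hl2
    cases q2 with
    | nil => rfl
    | cons b q2' => exact absurd (List.isChain_cons_cons.mp h2).1 (hl1 x b (by simp))
  | cons a q1' ih =>
    intro x q2 hx h1 h2 hl1 hl2
    have hxa : R x a := (List.isChain_cons_cons.mp h1).1
    cases q2 with
    | nil => exact absurd hxa (hl2 x a (by simp))
    | cons b q2' =>
      have hxb : R x b := (List.isChain_cons_cons.mp h2).1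
      have hab : a = b := hP x a b hx hxa hxb
      subst hab
      have h := ih a q2' (hPs x a hx hxa) (List.isChain_cons_cons.mp h1).2 (List.isChain_cons_cons.mp h2).2
        (fun t z ht => hl1 t z (by rw [List.getLast?_cons_cons]; exact ht))
        (fun t z ht => hl2 t z (by rw [List.getLast?_cons_cons]; exact ht))
      rw [h]

lemma last_two : ∀ (p : List V), 2 ≤ p.length → ∃ a x y, p = a ++ [x, y]
  | [], h => by simp at h
  | [x], h => by simp at h
  | [x, y], _ => ⟨[], x, y, rfl⟩
  | x :: y :: z :: t, _ => by
    obtain ⟨a, x', y', h⟩ := last_two (y :: z :: t) (by simp)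
    exact ⟨x :: a, x', y', by simp [h]⟩

lemma getLast?_append_cons (l₁ : List V) (y : V) (b : List V) :
    (l₁ ++ y :: b).getLast? = (y :: b).getLast? := by
  rw [List.getLast?_append]
  cases h : (y :: b).getLast? with
  | none => simp at h
  | some z => rfl

lemma chain'_parts {R : V → V → Prop} {p a b : List V} {x y : V}
    (hchain : List.Chain' R p) (hd : p = a ++ x :: y :: b) :
    R x y ∧ List.Chain' R (y :: b) ∧ List.Chain' (flip R) (x :: a.reverse) := by
  subst hd
  have h1 := (List.isChain_append.mp hchain).2.1
  have hxy : R x y := (List.isChain_cons_cons.mp h1).1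
  have h2 : List.Chain' R (y :: b) := (List.isChain_cons_cons.mp h1).2
  have hd' : a ++ x :: y :: b = (a ++ [x]) ++ (y :: b) := by simp
  have h3 : List.Chain' R (a ++ [x]) := (List.isChain_append.mp (hd' ▸ hchain)).1
  have h4 : List.Chain' (flip R) ((a ++ [x]).reverse) :=
    (List.isChain_reverse (R := flip R) (l := a ++ [x])).mpr h3
  rw [show (a ++ [x]).reverse = x :: a.reverse by simp] at h4
  exact ⟨hxy, h2, h4⟩

lemma find_transition (L : V → Label) :
    ∀ (p : List V) (x t : V), p.head? = some x → p.getLast? = some t →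
      L x = Label.fork → L t = Label.merge →
      ∃ a u w b, p = a ++ u :: w :: b ∧ L u = Label.fork ∧ L w = Label.merge
  | [], x, t, hx, ht, _, _ => by simp at hx
  | [x'], x, t, hx, ht, h1, h2 => by
    simp at hx ht; subst hx; subst ht; rw [h1] at h2; exact Label.noConfusion h2
  | x' :: y :: r, x, t, hx, ht, h1, h2 => by
    have hx' : x = x' := by simpa using hx.symm
    subst hx'
    cases hy : L y with
    | merge => exact ⟨[], x, y, r, by simp, h1, hy⟩
    | fork =>
      obtain ⟨a, u, w, b, hd, hu, hw⟩ := find_transition L (y :: r) y t rfl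
        (by rw [← ht, List.getLast?_cons_cons]) hy h2
      exact ⟨x :: a, u, w, b, by rw [hd]; rfl, hu, hw⟩

lemma labeling_isFunnel (A0 : Finset (V × V)) (L : V → Label)
    (hL : FunnelLabeling A0 L) : IsFunnel A0 := by
  obtain ⟨hfork, hmerge, hmf⟩ := hL
  set R := ArcAdj A0 with hRdef
  have succ_unique : ∀ x z z', L x = Label.merge → R x z → R x z' → z = z' := by
    intro x z z' hx hz hz'
    have := Finset.card_le_one.mp (hmerge x hx) (x, z)
      (Finset.mem_filter.mpr ⟨hz, rfl⟩) (x, z') (Finset.mem_filter.mpr ⟨hz', rfl⟩)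
    exact congrArg Prod.snd this
  have pred_unique : ∀ x z z', L x = Label.fork → R z x → R z' x → z = z' := by
    intro x z z' hx hz hz'
    have := Finset.card_le_one.mp (hfork x hx) (z, x)
      (Finset.mem_filter.mpr ⟨hz, rfl⟩) (z', x) (Finset.mem_filter.mpr ⟨hz', rfl⟩)
    exact congrArg Prod.fst this
  have sink_no_succ : ∀ x z, IsSink A0 x → ¬ R x z := by
    intro x z hx hz
    have h : (x, z) ∈ A0.filter (fun e => e.1 = x) := Finset.mem_filter.mpr ⟨hz, rfl⟩
    rw [Finset.card_eq_zero.mp hx] at h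
    exact absurd h (Finset.notMem_empty _)
  have source_no_pred : ∀ x z, IsSource A0 x → ¬ R z x := by
    intro x z hx hz
    have h : (z, x) ∈ A0.filter (fun e => e.2 = x) := Finset.mem_filter.mpr ⟨hz, rfl⟩
    rw [Finset.card_eq_zero.mp hx] at h
    exact absurd h (Finset.notMem_empty _)
  set P' : V → Prop := fun y => L y = Label.merge ∨ IsSink A0 y with hP'def
  set P'' : V → Prop := fun x => L x = Label.fork ∨ IsSource A0 x with hP''def
  have hP'1 : ∀ x z z', P' x → R x z → R x z' → z = z' := by
    rintro x z z' (hx | hx) hz hz'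
    · exact succ_unique x z z' hx hz hz'
    · exact absurd hz (sink_no_succ x z hx)
  have hP'2 : ∀ x z, P' x → R x z → P' z := by
    rintro x z (hx | hx) hz
    · cases hz' : L z with
      | fork => exact absurd ⟨hx, hz'⟩ (hmf x z hz)
      | merge => exact Or.inl hz'
    · exact absurd hz (sink_no_succ x z hx)
  have hP''1 : ∀ x z z', P'' x → flip R x z → flip R x z' → z = z' := by
    rintro x z z' (hx | hx) hz hz'
    · exact pred_unique x z z' hx hz hz'
    · exact absurd hz (source_no_pred x z hx)
  have hP''2 : ∀ x z, P'' x → flip R x z → P'' z := by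
    rintro x z (hx | hx) hz
    · cases hz' : L z with
      | merge => exact absurd ⟨hz', hx⟩ (hmf z x hz)
      | fork => exact Or.inl hz'
    · exact absurd hz (source_no_pred x z hx)
  intro p hp
  obtain ⟨hlen, hchain, hnodup, ⟨s, hs, hsrc⟩, ⟨t, ht, hsink⟩⟩ := hp
  -- find the special arc
  obtain ⟨a, x, y, b, hdec, hx, hy⟩ :
      ∃ a x y b, p = a ++ x :: y :: b ∧ P'' x ∧ P' y := by
    cases hLs : L s with
    | merge =>
      obtain ⟨y0, r, hp2⟩ : ∃ y0 r, p = s :: y0 :: r := by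
        match p, hs, hlen with
        | [], hs, _ => simp at hs
        | [x0], _, hlen => simp at hlen
        | x0 :: y0 :: r, hs, _ =>
          have hx0 : x0 = s := by simpa using hs
          exact ⟨y0, r, by rw [hx0]⟩
      have hchain2 := hp2 ▸ hchain
      have hsy : R s y0 := (List.isChain_cons_cons.mp hchain2).1
      refine ⟨[], s, y0, r, hp2, Or.inr hsrc, ?_⟩
      cases hLy : L y0 with
      | fork => exact absurd ⟨hLs, hLy⟩ (hmf s y0 hsy)
      | merge => exact Or.inl hLy
    | fork =>
      cases hLt : L t with
      | merge =>
        obtain ⟨a, u, w, b, hd, hu, hw⟩ := find_transition L p s t hs ht hLs hLt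
        exact ⟨a, u, w, b, hd, Or.inl hu, Or.inl hw⟩
      | fork =>
        obtain ⟨a, x1, y1, hd⟩ := last_two p hlen
        have hy1 : y1 = t := by
          have h : p.getLast? = some y1 := by
            rw [hd, show a ++ [x1, y1] = (a ++ [x1]) ++ [y1] by simp]
            exact List.getLast?_concat
          rw [h] at ht; exact Option.some_injective _ ht
        have hy1' : t = y1 := hy1.symm
        subst hy1'
        have harc : R x1 t := (chain'_parts hchain hd).1
        refine ⟨a, x1, t, [], hd, ?_, Or.inr hsink⟩
        cases hLx : L x1 with
        | fork => exact Or.inl hLx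
        | merge => exact absurd ⟨hLx, hLt⟩ (hmf x1 t harc)
  -- the arc (x, y) is private
  refine ⟨(x, y), by rw [hdec]; exact arc_mem_arcsOf a x y b, ?_⟩
  have path_eq : ∀ q, IsSourceSinkPath A0 q → (x, y) ∈ arcsOf q →
      ∀ q', IsSourceSinkPath A0 q' → (x, y) ∈ arcsOf q' → q = q' := by
    intro q hq hqm q' hq' hq'm
    obtain ⟨_, hqc, _, ⟨s1, hs1, hsrc1⟩, ⟨t1, ht1, hsink1⟩⟩ := hq
    obtain ⟨_, hq'c, _, ⟨s2, hs2, hsrc2⟩, ⟨t2, ht2, hsink2⟩⟩ := hq'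
    obtain ⟨a1, b1, hd1⟩ := mem_arcsOf q x y hqm
    obtain ⟨a2, b2, hd2⟩ := mem_arcsOf q' x y hq'm
    obtain ⟨-, hc1f, hc1b⟩ := chain'_parts hqc hd1
    obtain ⟨-, hc2f, hc2b⟩ := chain'_parts hq'c hd2
    have hb : b1 = b2 := by
      apply uniq_chain P' hP'1 hP'2 b1 y b2 hy hc1f hc2f
      · intro t' z ht' hRz
        have h : q.getLast? = some t' := by
          rw [hd1, show a1 ++ x :: y :: b1 = (a1 ++ [x]) ++ y :: b1 by simp,
            getLast?_append_cons]
          exact ht'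
        rw [ht1] at h
        exact sink_no_succ t' z ((Option.some_injective _ h) ▸ hsink1) hRz
      · intro t' z ht' hRz
        have h : q'.getLast? = some t' := by
          rw [hd2, show a2 ++ x :: y :: b2 = (a2 ++ [x]) ++ y :: b2 by simp,
            getLast?_append_cons]
          exact ht'
        rw [ht2] at h
        exact sink_no_succ t' z ((Option.some_injective _ h) ▸ hsink2) hRz
    have ha : a1.reverse = a2.reverse := by
      apply uniq_chain P'' hP''1 hP''2 a1.reverse x a2.reverse hx hc1b hc2b
      · intro t' z ht' hRz
        have e1 : (x :: a1.reverse) = (a1 ++ [x]).reverse := by simp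
        rw [e1, List.getLast?_reverse] at ht'
        have h : q.head? = some t' := by
          rw [hd1, show a1 ++ x :: y :: b1 = (a1 ++ [x]) ++ y :: b1 by simp, ← ht']
          cases a1 <;> simp
        rw [hs1] at h
        exact source_no_pred t' z ((Option.some_injective _ h) ▸ hsrc1) hRz
      · intro t' z ht' hRz
        have e1 : (x :: a2.reverse) = (a2 ++ [x]).reverse := by simp
        rw [e1, List.getLast?_reverse] at ht'
        have h : q'.head? = some t' := by
          rw [hd2, show a2 ++ x :: y :: b2 = (a2 ++ [x]) ++ y :: b2 by simp, ← ht']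
          cases a2 <;> simp
        rw [hs2] at h
        exact source_no_pred t' z ((Option.some_injective _ h) ▸ hsrc2) hRz
    rw [hd1, hd2, List.reverse_injective ha, hb]
  refine ⟨p, ⟨⟨hlen, hchain, hnodup, ⟨s, hs, hsrc⟩, ⟨t, ht, hsink⟩⟩,
    by rw [hdec]; exact arc_mem_arcsOf a x y b⟩, ?_⟩
  intro q hq
  exact path_eq q hq.1 hq.2 p ⟨hlen, hchain, hnodup, ⟨s, hs, hsrc⟩, ⟨t, ht, hsink⟩⟩
    (by rw [hdec]; exact arc_mem_arcsOf a x y b)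


/-- If `A'` is a minimum-cardinality arc set such that `D - A'` is
a funnel and `L` is a funnel labeling of `D - A'`, then every arc set `B`
obtained from `D` and `L` by the satisfaction rule has `|B| = |A'|`. -/
theorem satRule_card_eq_opt (A A' : Finset (V × V)) (hdag : IsDAG A)
    (hsub : A' ⊆ A) (hfun : IsFunnel (A \ A'))
    (hmin : ∀ B ⊆ A, IsFunnel (A \ B) → A'.card ≤ B.card)
    (L : V → Label) (hL : FunnelLabeling (A \ A') L)
    (B : Finset (V × V)) (hB : SatRule A L B) :
    B.card = A'.card := by
  classical
  obtain ⟨f, hf, hBdef⟩ := hB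
  have noloop : ∀ v : V, (v, v) ∉ A := fun v h => hdag v (Relation.TransGen.single h)
  have hne : ∀ u v : V, (u, v) ∈ A → u ≠ v := fun u v h e => noloop u (e ▸ h)
  have hfmem : ∀ v e, e ∈ f v → e ∈ A ∧ (e.1 = v ∨ e.2 = v) := by
    intro v e he
    rcases hf v with ⟨-, (⟨u, hu1, hu2, hS⟩ | ⟨-, hS⟩)⟩ | ⟨-, (⟨u, hu1, hu2, hS⟩ | ⟨-, hS⟩)⟩ <;>
      rw [hS] at he <;>
      simp only [outArcs, inArcs, Finset.mem_erase, Finset.mem_filter] at he <;> tauto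
  have hBsub : B ⊆ A := by
    intro e he
    rw [hBdef] at he
    obtain ⟨v, -, hv⟩ := Finset.mem_biUnion.mp he
    exact (hfmem v e hv).1
  have hmemB : ∀ e, e ∈ B ↔ ∃ v, e ∈ f v := by
    intro e; rw [hBdef]; simp [Finset.mem_biUnion]
  have memB_iff : ∀ e, e ∈ B ↔ (e ∈ f e.1 ∨ e ∈ f e.2) := by
    intro e
    rw [hmemB]
    constructor
    · rintro ⟨v, hv⟩
      rcases (hfmem v e hv).2 with h | h
      · exact Or.inl (h.symm ▸ hv)
      · exact Or.inr (h.symm ▸ hv)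
    · rintro (h | h)
      exacts [⟨e.1, h⟩, ⟨e.2, h⟩]
  have hfM : ∀ v, L v = Label.merge →
      (∃ u, (v, u) ∈ A ∧ L u = Label.merge ∧ f v = (outArcs A v).erase (v, u)) ∨
      ((∀ u, (v, u) ∈ A → L u ≠ Label.merge) ∧ f v = outArcs A v) := by
    intro v hv
    rcases hf v with ⟨-, h⟩ | ⟨hv', -⟩
    · exact h
    · rw [hv] at hv'; exact Label.noConfusion hv'
  have hfF : ∀ v, L v = Label.fork →
      (∃ u, (u, v) ∈ A ∧ L u = Label.fork ∧ f v = (inArcs A v).erase (u, v)) ∨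
      ((∀ u, (u, v) ∈ A → L u ≠ Label.fork) ∧ f v = inArcs A v) := by
    intro v hv
    rcases hf v with ⟨hv', -⟩ | ⟨-, h⟩
    · rw [hv] at hv'; exact Label.noConfusion hv'
    · exact h
  have K1 : ∀ u v, (u, v) ∈ A → L u = Label.fork → (u, v) ∉ f u := by
    intro u v huv hLu hmem
    rcases hfF u hLu with ⟨w, -, -, hS⟩ | ⟨-, hS⟩ <;> rw [hS] at hmem
    · exact hne u v huv (Finset.mem_filter.mp (Finset.mem_of_mem_erase hmem)).2.symm
    · exact hne u v huv (Finset.mem_filter.mp hmem).2.symm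
  have K2 : ∀ u v, (u, v) ∈ A → L v = Label.merge → (u, v) ∉ f v := by
    intro u v huv hLv hmem
    rcases hfM v hLv with ⟨w, -, -, hS⟩ | ⟨-, hS⟩ <;> rw [hS] at hmem
    · exact hne u v huv (Finset.mem_filter.mp (Finset.mem_of_mem_erase hmem)).2
    · exact hne u v huv (Finset.mem_filter.mp hmem).2
  have P1 : ∀ u v, (u, v) ∈ A → L u = Label.fork → L v = Label.merge → (u, v) ∈ A \ B := by
    intro u v huv h1 h2
    refine Finset.mem_sdiff.mpr ⟨huv, fun hB' => ?_⟩
    rcases (memB_iff (u, v)).mp hB' with h | h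
    · exact K1 u v huv h1 h
    · exact K2 u v huv h2 h
  have P4 : ∀ u v, (u, v) ∈ A → L u = Label.merge → L v = Label.fork → (u, v) ∈ B := by
    intro u v huv h1 h2
    rcases hfM u h1 with ⟨w, hw1, hw2, hS⟩ | ⟨-, hS⟩
    · refine (memB_iff (u, v)).mpr (Or.inl ?_)
      rw [hS]
      refine Finset.mem_erase.mpr ⟨?_, Finset.mem_filter.mpr ⟨huv, rfl⟩⟩
      intro hcon
      have : v = w := congrArg Prod.snd hcon
      rw [this, hw2] at h2; exact Label.noConfusion h2
    · exact (memB_iff (u, v)).mpr (Or.inl (hS ▸ Finset.mem_filter.mpr ⟨huv, rfl⟩))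
  -- `L` is a funnel labeling of `A \ B`
  have hLB : FunnelLabeling (A \ B) L := by
    refine ⟨?_, ?_, ?_⟩
    · intro v hv
      apply Finset.card_le_one.mpr
      rcases hfF v hv with ⟨w, -, -, hS⟩ | ⟨-, hS⟩
      · have key : ∀ e ∈ (A \ B).filter (fun e => e.2 = v), e = (w, v) := by
          intro e he
          obtain ⟨heAB, he2⟩ := Finset.mem_filter.mp he
          obtain ⟨heA, heB⟩ := Finset.mem_sdiff.mp heAB
          by_contra hcon
          refine heB ((memB_iff e).mpr (Or.inr ?_))
          rw [he2, hS]
          refine Finset.mem_erase.mpr ⟨?_, Finset.mem_filter.mpr ⟨heA, he2⟩⟩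
          intro hcon2
          exact hcon (by rw [hcon2])
        intro a ha b hb
        rw [key a ha, key b hb]
      · intro a ha b hb
        exfalso
        obtain ⟨haAB, ha2⟩ := Finset.mem_filter.mp ha
        obtain ⟨haA, haB⟩ := Finset.mem_sdiff.mp haAB
        refine haB ((memB_iff a).mpr (Or.inr ?_))
        rw [ha2, hS]
        exact Finset.mem_filter.mpr ⟨haA, ha2⟩
    · intro v hv
      apply Finset.card_le_one.mpr
      rcases hfM v hv with ⟨w, -, -, hS⟩ | ⟨-, hS⟩
      · have key : ∀ e ∈ (A \ B).filter (fun e => e.1 = v), e = (v, w) := by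
          intro e he
          obtain ⟨heAB, he1⟩ := Finset.mem_filter.mp he
          obtain ⟨heA, heB⟩ := Finset.mem_sdiff.mp heAB
          by_contra hcon
          refine heB ((memB_iff e).mpr (Or.inl ?_))
          rw [he1, hS]
          refine Finset.mem_erase.mpr ⟨?_, Finset.mem_filter.mpr ⟨heA, he1⟩⟩
          intro hcon2
          exact hcon (by rw [hcon2])
        intro a ha b hb
        rw [key a ha, key b hb]
      · intro a ha b hb
        exfalso
        obtain ⟨haAB, ha1⟩ := Finset.mem_filter.mp ha
        obtain ⟨haA, haB⟩ := Finset.mem_sdiff.mp haAB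
        refine haB ((memB_iff a).mpr (Or.inl ?_))
        rw [ha1, hS]
        exact Finset.mem_filter.mpr ⟨haA, ha1⟩
    · rintro v u hvu ⟨h1, h2⟩
      obtain ⟨hA, hB'⟩ := Finset.mem_sdiff.mp hvu
      exact hB' (P4 v u hA h1 h2)
  have hfunAB : IsFunnel (A \ B) := labeling_isFunnel (A \ B) L hLB
  have hge : A'.card ≤ B.card := hmin B hBsub hfunAB
  -- now the injection from A \ A' into A \ B
  have hLmf : ∀ u v, (u, v) ∈ A \ A' → ¬(L u = Label.merge ∧ L v = Label.fork) := hL.2.2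
  set g : V × V → V × V := fun e =>
    if h1 : L e.1 = Label.merge ∧
        ∃ u, (e.1, u) ∈ A ∧ L u = Label.merge ∧ f e.1 = (outArcs A e.1).erase (e.1, u) then
      (e.1, h1.2.choose)
    else if h2 : L e.2 = Label.fork ∧
        ∃ u, (u, e.2) ∈ A ∧ L u = Label.fork ∧ f e.2 = (inArcs A e.2).erase (u, e.2) then
      (h2.2.choose, e.2)
    else e
    with hgdef
  have gspec : ∀ e ∈ A \ A', (g e ∈ A \ B) ∧
      (L e.1 = Label.merge → (g e).1 = e.1 ∧ L (g e).1 = Label.merge ∧ L (g e).2 = Label.merge) ∧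
      ((L e.1 = Label.fork ∧ L e.2 = Label.fork) →
        (g e).2 = e.2 ∧ L (g e).1 = Label.fork ∧ L (g e).2 = Label.fork) ∧
      ((L e.1 = Label.fork ∧ L e.2 = Label.merge) → g e = e) := by
    rintro ⟨u, v⟩ he
    obtain ⟨heA, heA'⟩ := Finset.mem_sdiff.mp he
    cases hL1 : L u with
    | merge =>
      have hL2 : L v = Label.merge := by
        cases hL2 : L v with
        | fork => exact absurd ⟨hL1, hL2⟩ (hLmf u v he)
        | merge => rfl
      have hex : ∃ w, (u, w) ∈ A ∧ L w = Label.merge ∧ f u = (outArcs A u).erase (u, w) := by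
        rcases hfM u hL1 with h | ⟨hall, -⟩
        · exact h
        · exact absurd hL2 (hall v heA)
      have hg : g (u, v) = (u, hex.choose) := by
        simp only [hgdef]
        exact dif_pos ⟨hL1, hex⟩
      obtain ⟨hc1, hc2, hc3⟩ := hex.choose_spec
      have hgAB : g (u, v) ∈ A \ B := by
        rw [hg]
        refine Finset.mem_sdiff.mpr ⟨hc1, fun hB' => ?_⟩
        rcases (memB_iff _).mp hB' with h | h
        · have h' : (u, hex.choose) ∈ f u := h
          have h2 : (u, hex.choose) ∈ (outArcs A u).erase (u, hex.choose) := by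
            rw [← hc3]; exact h'
          exact Finset.notMem_erase _ _ h2
        · exact K2 u hex.choose hc1 hc2 h
      refine ⟨hgAB, fun _ => ?_, fun hcon => absurd hcon (by simp [hL1, hL2]),
        fun hcon => absurd hcon (by simp [hL1, hL2])⟩
      rw [hg]; exact ⟨rfl, hL1, hc2⟩
    | fork =>
      cases hL2 : L v with
      | fork =>
        have hneg1 : ¬(L (u, v).1 = Label.merge ∧
            ∃ w, ((u, v).1, w) ∈ A ∧ L w = Label.merge ∧
              f (u, v).1 = (outArcs A (u, v).1).erase ((u, v).1, w)) := by
          intro hcon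
          have := hcon.1
          rw [hL1] at this; exact Label.noConfusion this
        have hex : ∃ w, (w, v) ∈ A ∧ L w = Label.fork ∧ f v = (inArcs A v).erase (w, v) := by
          rcases hfF v hL2 with h | ⟨hall, -⟩
          · exact h
          · exact absurd hL1 (hall u heA)
        have hg : g (u, v) = (hex.choose, v) := by
          simp only [hgdef]
          rw [dif_neg hneg1]
          exact dif_pos ⟨hL2, hex⟩
        obtain ⟨hc1, hc2, hc3⟩ := hex.choose_spec
        have hgAB : g (u, v) ∈ A \ B := by
          rw [hg]
          refine Finset.mem_sdiff.mpr ⟨hc1, fun hB' => ?_⟩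
          rcases (memB_iff _).mp hB' with h | h
          · exact K1 hex.choose v hc1 hc2 h
          · have h' : (hex.choose, v) ∈ f v := h
            have h2 : (hex.choose, v) ∈ (inArcs A v).erase (hex.choose, v) := by
              rw [← hc3]; exact h'
            exact Finset.notMem_erase _ _ h2
        refine ⟨hgAB, fun hcon => absurd hcon (by simp [hL1, hL2]), fun _ => ?_,
          fun hcon => absurd hcon (by simp [hL1, hL2])⟩
        rw [hg]; exact ⟨rfl, hc2, hL2⟩
      | merge =>
        have hneg1 : ¬(L (u, v).1 = Label.merge ∧
            ∃ w, ((u, v).1, w) ∈ A ∧ L w = Label.merge ∧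
              f (u, v).1 = (outArcs A (u, v).1).erase ((u, v).1, w)) := by
          intro hcon
          have := hcon.1
          rw [hL1] at this; exact Label.noConfusion this
        have hneg2 : ¬(L (u, v).2 = Label.fork ∧
            ∃ w, (w, (u, v).2) ∈ A ∧ L w = Label.fork ∧
              f (u, v).2 = (inArcs A (u, v).2).erase (w, (u, v).2)) := by
          intro hcon
          have := hcon.1
          rw [hL2] at this; exact Label.noConfusion this
        have hg : g (u, v) = (u, v) := by
          simp only [hgdef]
          rw [dif_neg hneg1, dif_neg hneg2]
        refine ⟨?_, fun hcon => absurd hcon (by simp [hL1, hL2]),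
          fun hcon => absurd hcon (by simp [hL1, hL2]), fun _ => hg⟩
        rw [hg]; exact P1 u v heA hL1 hL2
  have hinj : Set.InjOn g ↑(A \ A') := by
    intro e1 he1' e2 he2' hgeq
    have he1 : e1 ∈ A \ A' := he1'
    have he2 : e2 ∈ A \ A' := he2'
    obtain ⟨-, hs1M, hs1FF, hs1FM⟩ := gspec e1 he1
    obtain ⟨-, hs2M, hs2FF, hs2FM⟩ := gspec e2 he2
    cases hA1 : L e1.1 with
    | merge =>
      obtain ⟨hp1, hq1, -⟩ := hs1M hA1
      cases hA2 : L e2.1 with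
      | merge =>
        obtain ⟨hp2, -, -⟩ := hs2M hA2
        have h11 : e1.1 = e2.1 := by rw [← hp1, ← hp2, hgeq]
        have hdeg := Finset.card_le_one.mp (hL.2.1 e1.1 hA1)
        exact hdeg e1 (Finset.mem_filter.mpr ⟨he1, rfl⟩) e2
          (Finset.mem_filter.mpr ⟨he2, h11.symm⟩)
      | fork =>
        exfalso
        cases hA2' : L e2.2 with
        | fork =>
          obtain ⟨-, hq2, -⟩ := hs2FF ⟨hA2, hA2'⟩
          rw [hgeq, hq2] at hq1; exact Label.noConfusion hq1
        | merge =>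
          have hg2 := hs2FM ⟨hA2, hA2'⟩
          rw [hgeq, hg2, hA2] at hq1; exact Label.noConfusion hq1
    | fork =>
      cases hA1' : L e1.2 with
      | fork =>
        obtain ⟨hp1, hq1, hr1⟩ := hs1FF ⟨hA1, hA1'⟩
        cases hA2 : L e2.1 with
        | merge =>
          exfalso
          obtain ⟨-, hq2, -⟩ := hs2M hA2
          rw [hgeq, hq2] at hq1; exact Label.noConfusion hq1
        | fork =>
          cases hA2' : L e2.2 with
          | fork =>
            obtain ⟨hp2, -, -⟩ := hs2FF ⟨hA2, hA2'⟩
            have h22 : e1.2 = e2.2 := by rw [← hp1, ← hp2, hgeq]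
            have hdeg := Finset.card_le_one.mp (hL.1 e1.2 hA1')
            exact hdeg e1 (Finset.mem_filter.mpr ⟨he1, rfl⟩) e2
              (Finset.mem_filter.mpr ⟨he2, h22.symm⟩)
          | merge =>
            exfalso
            have hg2 := hs2FM ⟨hA2, hA2'⟩
            rw [hgeq, hg2, hA2'] at hr1; exact Label.noConfusion hr1
      | merge =>
        have hg1 := hs1FM ⟨hA1, hA1'⟩
        cases hA2 : L e2.1 with
        | merge =>
          exfalso
          obtain ⟨-, hq2, -⟩ := hs2M hA2
          have hcon : L e1.1 = Label.merge := by rw [← hg1, hgeq]; exact hq2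
          rw [hA1] at hcon; exact Label.noConfusion hcon
        | fork =>
          cases hA2' : L e2.2 with
          | fork =>
            exfalso
            obtain ⟨-, -, hr2⟩ := hs2FF ⟨hA2, hA2'⟩
            rw [← hgeq, hg1, hA1'] at hr2; exact Label.noConfusion hr2
          | merge =>
            have hg2 := hs2FM ⟨hA2, hA2'⟩
            rw [← hg1, ← hg2, hgeq]
  have hle : (A \ A').card ≤ (A \ B).card :=
    Finset.card_le_card_of_injOn g (fun e he => (gspec e he).1) hinj
  have c1 : (A \ A').card = A.card - A'.card := Finset.card_sdiff_of_subset hsub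
  have c2 : (A \ B).card = A.card - B.card := Finset.card_sdiff_of_subset hBsub
  have c3 : A'.card ≤ A.card := Finset.card_le_card hsub
  have c4 : B.card ≤ A.card := Finset.card_le_card hBsub
  omega
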